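/- Let 0 → Ω → E → F → 0 be a short exact sequence of vector bundles on a variety X with rk F = f, let π : P(F) → X be the projective bundle of F, and let K := Ker(π*E(−1) → O_{P(F)}) be the kernel of the composition π*E(−1) → π*F(−1) → O_{P(F)} (the last map coming from the relative Euler sequence). Then there is a short exact sequence of vector bundles on P(F): 0 → π*Ω → K(1) → Ω^1_{P(F)/X}(1) → 0. -/
import Mathlib

open CategoryTheory CategoryTheory.Limits
open scoped Pseudoelement

section Aux

open CategoryTheory.Abelian Category

variable {D : Type*} [Category D] [Abelian D]

theorem aux_ses_untwisted
    (pΩ pE pF OP relΩ : D)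
    (a : pΩ ⟶ pE) [Mono a] (b : pE ⟶ pF) [Epi b] (hab : a ≫ b = 0)
    (hexab : (ShortComplex.mk a b hab).Exact)
    (euler : relΩ ⟶ pF) [Mono euler] (q : pF ⟶ OP) [Epi q] (heq : euler ≫ q = 0)
    (hexeq : (ShortComplex.mk euler q heq).Exact)
    (habq : a ≫ (b ≫ q) = 0) :
    ∃ (β : kernel (b ≫ q) ⟶ relΩ)
      (w : kernel.lift (b ≫ q) a habq ≫ β = 0),
      (ShortComplex.mk (kernel.lift (b ≫ q) a habq) β w).ShortExact := by
  -- `euler` is a kernel of `q`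
  have hker := hexeq.fIsKernel
  obtain ⟨β, hβ⟩ := KernelFork.IsLimit.lift' hker (kernel.ι (b ≫ q) ≫ b)
    (by rw [Category.assoc, kernel.condition])
  -- hβ : β ≫ euler = kernel.ι (b ≫ q) ≫ b
  dsimp at hβ
  have wlift : kernel.lift (b ≫ q) a habq ≫ β = 0 := by
    rw [← cancel_mono euler, Category.assoc, hβ, zero_comp,
      ← Category.assoc, kernel.lift_ι, hab]
  refine ⟨β, wlift, ?_⟩
  have monolift : Mono (kernel.lift (b ≫ q) a habq) := by
    have : kernel.lift (b ≫ q) a habq ≫ kernel.ι (b ≫ q) = a := kernel.lift_ι _ _ _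
    exact mono_of_mono_fac this
  -- exactness of kernel sequence at pE
  have hKexact : (ShortComplex.mk (kernel.ι (b ≫ q)) (b ≫ q)
      (kernel.condition _)).Exact := ShortComplex.exact_of_f_is_kernel _ (kernelIsKernel _)
  have epiβ : Epi β := by
    apply Pseudoelement.epi_of_pseudo_surjective
    intro x
    obtain ⟨y, hy⟩ := Pseudoelement.pseudo_surjective_of_epi b (Pseudoelement.pseudoApply euler x)
    have hy0 : Pseudoelement.pseudoApply (b ≫ q) y = 0 := by
      rw [Pseudoelement.comp_apply, hy, ← Pseudoelement.comp_apply, heq,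
        Pseudoelement.zero_apply]
    obtain ⟨z, hz⟩ := Pseudoelement.pseudo_exact_of_exact hKexact y hy0
    refine ⟨z, Pseudoelement.pseudo_injective_of_mono euler ?_⟩
    rw [← Pseudoelement.comp_apply, hβ, Pseudoelement.comp_apply, hz, hy]
  refine { mono_f := monolift, epi_g := epiβ, exact := ?_ }
  apply Pseudoelement.exact_of_pseudo_exact
  intro z hz
  have hbz : Pseudoelement.pseudoApply b
      (Pseudoelement.pseudoApply (kernel.ι (b ≫ q)) z) = 0 := by
    rw [← Pseudoelement.comp_apply, ← hβ, Pseudoelement.comp_apply, hz,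
      Pseudoelement.apply_zero]
  obtain ⟨w, hw⟩ := Pseudoelement.pseudo_exact_of_exact hexab _ hbz
  refine ⟨w, Pseudoelement.pseudo_injective_of_mono (kernel.ι (b ≫ q)) ?_⟩
  rw [← Pseudoelement.comp_apply, kernel.lift_ι]
  exact hw

end Aux

/-- **The short exact sequence `0 → π*Ω → K(1) → Ω¹_{P(F)/X}(1) → 0`.**
We work in an abelian category `D`, interpreted as (coherent) sheaves on the
projective bundle `π : P(F) → X` of the vector bundle `F` (of rank `f`) appearing
in a short exact sequence `0 → Ω → E → F → 0` of vector bundles on a variety `X`.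
The data is interpreted as follows:
* `tw : D ⥤ D` is the (exact) twisting functor `— ⊗ 𝒪_{P(F)}(1)`;
* `pΩ`, `pE`, `pF` are `π*Ω(−1)`, `π*E(−1)`, `π*F(−1)`; `OP` is `𝒪_{P(F)}`;
  `relΩ` is the relative cotangent bundle `Ω¹_{P(F)/X}`;
* `a : π*Ω(−1) ⟶ π*E(−1)` and `b : π*E(−1) ⟶ π*F(−1)` form the twisted pullback
  of the sequence `0 → Ω → E → F → 0` (a short exact sequence);
* `euler : Ω¹_{P(F)/X} ⟶ π*F(−1)` and `q : π*F(−1) ⟶ 𝒪_{P(F)}` form the relative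
  Euler sequence `0 → Ω¹_{P(F)/X} → π*F(−1) → 𝒪_{P(F)} → 0` (a short exact sequence);
* `K := Ker(π*E(−1) → 𝒪_{P(F)})` is the kernel of the composite `b ≫ q`, and
  `π*Ω(−1) ⟶ K` is the canonical map `kernel.lift _ a _` induced by `a`.

**Conclusion:** twisting by `𝒪_{P(F)}(1)`, there is a short exact sequence of
vector bundles on `P(F)`:  `0 → π*Ω → K(1) → Ω¹_{P(F)/X}(1) → 0`, whose first map
is the twist of the canonical map `π*Ω(−1) ⟶ K`. -/
theorem pullback_kernel_relative_cotangent_ses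
    {D : Type*} [Category D] [Abelian D]
    (tw : D ⥤ D) [tw.Additive]
    [PreservesFiniteLimits tw] [PreservesFiniteColimits tw]
    (pΩ pE pF OP relΩ : D)
    (a : pΩ ⟶ pE) [Mono a] (b : pE ⟶ pF) [Epi b] (hab : a ≫ b = 0)
    (hexab : (ShortComplex.mk a b hab).Exact)
    (euler : relΩ ⟶ pF) [Mono euler] (q : pF ⟶ OP) [Epi q] (heq : euler ≫ q = 0)
    (hexeq : (ShortComplex.mk euler q heq).Exact)
    (habq : a ≫ (b ≫ q) = 0) :
    ∃ (β : tw.obj (kernel (b ≫ q)) ⟶ tw.obj relΩ)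
      (w : tw.map (kernel.lift (b ≫ q) a habq) ≫ β = 0),
      Mono (tw.map (kernel.lift (b ≫ q) a habq)) ∧
      Epi β ∧
      (ShortComplex.mk (tw.map (kernel.lift (b ≫ q) a habq)) β w).Exact := by
  obtain ⟨β₀, w₀, hse⟩ := aux_ses_untwisted pΩ pE pF OP relΩ a b hab hexab
    euler q heq hexeq habq
  have hmap := hse.map_of_exact tw
  exact ⟨tw.map β₀, by rw [← tw.map_comp, w₀, tw.map_zero],
    hmap.mono_f, hmap.epi_g, hmap.exact⟩
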